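/- Let n ≥ 1, let a, b ∈ ℤ, and let I = (i_1,…,i_r) be a partition of n into positive parts. Then A(a,I) − A(b,I) + A'(b−a,I) = 0. (This is the Chern-number form of Proposition 2.7(iii): the relation [P^n(a)] − [P^n(b)] + [P^n(b−a), c_𝒯(b−a)] = 0 holds in the unitary bordism ring Ω_*^U, since by the Milnor–Novikov theorem a bordism class in Ω_*^U is determined by its Chern numbers.) -/
import Mathlib


open MvPolynomial Finset

/-- `x = X 0` in `ℤ[x,y]`. -/
noncomputable def xv : MvPolynomial (Fin 2) ℤ := MvPolynomial.X 0

/-- `y = X 1` in `ℤ[x,y]`. -/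
noncomputable def yv : MvPolynomial (Fin 2) ℤ := MvPolynomial.X 1

/-- The `i`-th Chern class `c_i(a)` of the tangent bundle of `P^n(a)`:
`C(n,i)·y^i + (2·C(n,i−1) − a·C(n−1,i−1))·x·y^{i−1}`. -/
noncomputable def chern (n : ℕ) (a : ℤ) (i : ℕ) : MvPolynomial (Fin 2) ℤ :=
  MvPolynomial.C (n.choose i : ℤ) * yv ^ i
    + MvPolynomial.C (2 * (n.choose (i - 1) : ℤ) - a * ((n - 1).choose (i - 1) : ℤ))
      * xv * yv ^ (i - 1)

/-- Coefficient of the monomial `x·y^{n-1}`. -/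
noncomputable def coeffXY (n : ℕ) (f : MvPolynomial (Fin 2) ℤ) : ℤ :=
  f.coeff (Finsupp.single (0 : Fin 2) 1 + Finsupp.single (1 : Fin 2) (n - 1))

/-- Coefficient of the monomial `y^n`. -/
noncomputable def coeffY (n : ℕ) (f : MvPolynomial (Fin 2) ℤ) : ℤ :=
  f.coeff (Finsupp.single (1 : Fin 2) n)

/-- The Chern number `A(a,I) = coeff_{x·y^{n−1}}(∏ c_{i_q}(a)) + a·coeff_{y^n}(∏ c_{i_q}(a))`. -/
noncomputable def chernNum (n : ℕ) (a : ℤ) {r : ℕ} (i : Fin r → ℕ) : ℤ :=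
  coeffXY n (∏ q, chern n a (i q)) + a * coeffY n (∏ q, chern n a (i q))

/-- The `i`-th Chern class `c'_i(a)` of the non-standard stably complex structure
`c_𝒯(a)` on `P^n(a)`: `C(n,i)·y^i − a·C(n−1,i−1)·x·y^{i−1}`. -/
noncomputable def chern' (n : ℕ) (a : ℤ) (i : ℕ) : MvPolynomial (Fin 2) ℤ :=
  MvPolynomial.C (n.choose i : ℤ) * yv ^ i
    - MvPolynomial.C (a * ((n - 1).choose (i - 1) : ℤ)) * xv * yv ^ (i - 1)

/-- The Chern number `A'(a,I)` of `(P^n(a), c_𝒯(a))`. -/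
noncomputable def chernNum' (n : ℕ) (a : ℤ) {r : ℕ} (i : Fin r → ℕ) : ℤ :=
  coeffXY n (∏ q, chern' n a (i q)) + a * coeffY n (∏ q, chern' n a (i q))

/-- `A(a,I) − A(b,I) + A'(b−a,I) = 0`, the Chern-number form of the
relation `[P^n(a)] − [P^n(b)] + [P^n(b−a), c_𝒯(b−a)] = 0` in `Ω_*^U`
(Proposition 2.7(iii)). -/
lemma aux_prod_form (n : ℕ) (β : ℕ → ℤ) (g : ℕ → MvPolynomial (Fin 2) ℤ)
    (hg : ∀ j, g j = MvPolynomial.C (n.choose j : ℤ) * yv ^ j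
      + MvPolynomial.C (β j) * (xv * yv ^ (j - 1)))
    {r : ℕ} (i : Fin r → ℕ) (hi : ∀ q, 1 ≤ i q)
    (s : Finset (Fin r)) (hs : s.Nonempty) :
    ∃ h : MvPolynomial (Fin 2) ℤ,
      ∏ q ∈ s, g (i q) =
        MvPolynomial.C (∏ q ∈ s, (n.choose (i q) : ℤ)) * yv ^ (∑ q ∈ s, i q)
        + MvPolynomial.C (∑ q ∈ s, β (i q) * ∏ p ∈ s.erase q, (n.choose (i p) : ℤ))
            * (xv * yv ^ ((∑ q ∈ s, i q) - 1))
        + xv ^ 2 * h := by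
  induction hs using Finset.Nonempty.cons_induction with
  | singleton q =>
    refine ⟨0, ?_⟩
    simp only [Finset.prod_singleton, Finset.sum_singleton, Finset.erase_singleton,
      Finset.prod_empty, mul_one, hg]
    ring
  | cons q s hq hs ih =>
    obtain ⟨h, e⟩ := ih
    obtain ⟨m', hm⟩ : ∃ m', ∑ p ∈ s, i p = m' + 1 := by
      obtain ⟨p, hp⟩ := hs
      have h1 : 1 ≤ ∑ p ∈ s, i p :=
        le_trans (hi p) (Finset.single_le_sum (fun t _ => Nat.zero_le _) hp)
      exact ⟨(∑ p ∈ s, i p) - 1, by omega⟩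
    obtain ⟨j', hj⟩ : ∃ j', i q = j' + 1 := ⟨i q - 1, by have := hi q; omega⟩
    have hsum' : ∑ p ∈ Finset.cons q s hq, β (i p)
          * ∏ t ∈ (Finset.cons q s hq).erase p, (n.choose (i t) : ℤ)
        = β (i q) * ∏ t ∈ s, (n.choose (i t) : ℤ)
          + (n.choose (i q) : ℤ)
            * ∑ p ∈ s, β (i p) * ∏ t ∈ s.erase p, (n.choose (i t) : ℤ) := by
      rw [Finset.sum_cons, Finset.erase_cons, Finset.mul_sum]
      congr 1
      refine Finset.sum_congr rfl fun p hp => ?_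
      have hqp : q ≠ p := fun hh => hq (hh ▸ hp)
      rw [Finset.erase_cons_of_ne hq hqp, Finset.prod_cons]
      ring
    refine ⟨MvPolynomial.C (n.choose (i q) : ℤ) * yv ^ (i q) * h
        + MvPolynomial.C (β (i q)
            * ∑ p ∈ s, β (i p) * ∏ t ∈ s.erase p, (n.choose (i t) : ℤ))
            * (yv ^ j' * yv ^ m')
        + MvPolynomial.C (β (i q)) * (xv * yv ^ j') * h, ?_⟩
    rw [Finset.prod_cons, e, Finset.sum_cons, Finset.prod_cons, hsum', hg]
    rw [hm, hj]
    have e1 : j' + 1 + (m' + 1) - 1 = j' + m' + 1 := by omega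
    simp only [Nat.add_sub_cancel, e1, map_add, map_mul]
    ring

lemma coeffXY_form (n : ℕ) (A B : ℤ) (h : MvPolynomial (Fin 2) ℤ) :
    coeffXY n (MvPolynomial.C A * yv ^ n + MvPolynomial.C B * (xv * yv ^ (n - 1))
      + xv ^ 2 * h) = B := by
  have hne : Finsupp.single (1 : Fin 2) n
      ≠ Finsupp.single (0 : Fin 2) 1 + Finsupp.single (1 : Fin 2) (n - 1) := by
    intro hcontra
    have := DFunLike.congr_fun hcontra 0
    simp [Finsupp.single_apply] at this
  have hx2 : (MvPolynomial.X 0 : MvPolynomial (Fin 2) ℤ) ^ 2 * h = MvPolynomial.X 0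
      * (MvPolynomial.X 0 * h) := by ring
  unfold coeffXY xv yv
  rw [coeff_add, coeff_add, coeff_C_mul, coeff_C_mul, coeff_X_pow, coeff_X_mul,
    coeff_X_pow, hx2, coeff_X_mul, coeff_X_mul']
  have hmem : (0 : Fin 2) ∉ (Finsupp.single (1 : Fin 2) (n - 1)).support := by
    simp [Finsupp.single_apply]
  rw [if_neg hne, if_pos rfl, if_neg hmem]
  ring

lemma coeffY_form (n : ℕ) (A B : ℤ) (h : MvPolynomial (Fin 2) ℤ) :
    coeffY n (MvPolynomial.C A * yv ^ n + MvPolynomial.C B * (xv * yv ^ (n - 1))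
      + xv ^ 2 * h) = A := by
  have hx2 : (MvPolynomial.X 0 : MvPolynomial (Fin 2) ℤ) ^ 2 * h = MvPolynomial.X 0
      * (MvPolynomial.X 0 * h) := by ring
  unfold coeffY xv yv
  rw [coeff_add, coeff_add, coeff_C_mul, coeff_C_mul, coeff_X_pow, hx2,
    coeff_X_mul', coeff_X_mul']
  simp [Finsupp.single_apply]

theorem chernNum_relation (n r : ℕ) (hn : 1 ≤ n) (hr : 1 ≤ r)
    (i : Fin r → ℕ) (hi : ∀ q, 1 ≤ i q) (hsum : ∑ q, i q = n) (a b : ℤ) :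
    chernNum n a i - chernNum n b i + chernNum' n (b - a) i = 0 := by
  have hNe : (Finset.univ : Finset (Fin r)).Nonempty := ⟨⟨0, hr⟩, Finset.mem_univ _⟩
  obtain ⟨h1, e1⟩ := aux_prod_form n
    (fun j => 2 * (n.choose (j - 1) : ℤ) - a * ((n - 1).choose (j - 1) : ℤ))
    (chern n a) (fun j => by unfold chern; ring) i hi Finset.univ hNe
  obtain ⟨h2, e2⟩ := aux_prod_form n
    (fun j => 2 * (n.choose (j - 1) : ℤ) - b * ((n - 1).choose (j - 1) : ℤ))
    (chern n b) (fun j => by unfold chern; ring) i hi Finset.univ hNe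
  obtain ⟨h3, e3⟩ := aux_prod_form n
    (fun j => -((b - a) * ((n - 1).choose (j - 1) : ℤ)))
    (chern' n (b - a)) (fun j => by unfold chern'; simp only [map_neg]; ring) i hi Finset.univ hNe
  rw [hsum] at e1 e2 e3
  unfold chernNum chernNum'
  rw [e1, e2, e3, coeffXY_form, coeffXY_form, coeffXY_form,
    coeffY_form, coeffY_form, coeffY_form]
  have key : (∑ q : Fin r, (2 * (n.choose (i q - 1) : ℤ) - a * ((n - 1).choose (i q - 1) : ℤ))
        * ∏ p ∈ Finset.univ.erase q, (n.choose (i p) : ℤ))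
      - (∑ q : Fin r, (2 * (n.choose (i q - 1) : ℤ) - b * ((n - 1).choose (i q - 1) : ℤ))
        * ∏ p ∈ Finset.univ.erase q, (n.choose (i p) : ℤ))
      + (∑ q : Fin r, (-((b - a) * ((n - 1).choose (i q - 1) : ℤ)))
        * ∏ p ∈ Finset.univ.erase q, (n.choose (i p) : ℤ)) = 0 := by
    rw [← Finset.sum_sub_distrib, ← Finset.sum_add_distrib]
    exact Finset.sum_eq_zero fun q _ => by ring
  linear_combination key
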